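/- arXiv:2106.09994 — 2 statements merged into one kernel-verified Lean document; each statement's English description precedes it below -/
import Mathlib

section
/- Let H be the RKHS of a bounded measurable kernel k on X, ρ a finite measure on X, A a positive semidefinite trace-class operator on H, and p_A(x) = ⟨φ(x), A φ(x)⟩. Then the mean embedding of the measure p_A dρ satisfies, for any v ∈ H: ⟨v, w_{p_A}⟩_H = ⟨A, V⟩_HS, where w_{p_A} = ∫ φ(x) p_A(x) dρ(x) and V = ∫ v(x) φ(x) ⊗ φ(x) dρ(x). -/
open MeasureTheory
open scoped RealInnerProductSpace

theorem aux_pos_zero {H : Type*} [NormedAddCommGroup H] [InnerProductSpace ℝ H] [CompleteSpace H]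
    (A : H →L[ℝ] H) (hA : A.IsPositive) (y : H) (h : ⟪y, A y⟫ = 0) : A y = 0 := by
  have hsym := hA.1
  have hpos : ∀ z : H, (0:ℝ) ≤ ⟪z, A z⟫ := fun z => by
    simpa using hA.inner_nonneg_right z
  by_contra hne
  set n : ℝ := ‖A y‖ ^ 2 with hn
  have hnpos : 0 < n := by
    have : 0 < ‖A y‖ := norm_pos_iff.mpr hne
    positivity
  set c : ℝ := ⟪A y, A (A y)⟫ with hc
  have hcpos : 0 ≤ c := hpos (A y)
  set t : ℝ := -n / (c + 1) with ht
  have hc1 : (0:ℝ) < c + 1 := by linarith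
  have key : 0 ≤ ⟪y + t • A y, A (y + t • A y)⟫ := hpos _
  have expand : ⟪y + t • A y, A (y + t • A y)⟫ = c * t ^ 2 + 2 * t * n := by
    have hAadd : A (y + t • A y) = A y + t • A (A y) := by
      rw [map_add, A.map_smul]
    rw [hAadd]
    have h1 : ⟪y, A (A y)⟫ = ⟪A y, A y⟫ := (hsym y (A y)).symm
    have h2 : ⟪A y, A y⟫ = n := real_inner_self_eq_norm_sq (A y)
    rw [inner_add_left, inner_add_right, inner_add_right, real_inner_smul_left,
      real_inner_smul_left, real_inner_smul_right, real_inner_smul_right, h, h1, h2, ← hc]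
    ring
  rw [expand, ht] at key
  have heq : c * (-n / (c+1)) ^ 2 + 2 * (-n / (c+1)) * n = -(n^2 * (c + 2)) / (c+1)^2 := by
    field_simp
    ring
  rw [heq] at key
  have : 0 < n^2 * (c+2) / (c+1)^2 := by positivity
  rw [neg_div] at key
  linarith

/-- `⟨v, w_{p_A}⟩ = ⟨A, V⟩_HS` where `w_{p_A} = ∫ p_A(x) φ(x) dρ(x)` and
`V = ∫ v(x) φ(x) ⊗ φ(x) dρ(x)` (characterized weakly), with `v(x) = ⟨v, φ(x)⟩`, and the
Hilbert–Schmidt inner product expressed through a Hilbert basis `b`. -/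
theorem stmt9 {X : Type*} [MeasurableSpace X] {H : Type*} [NormedAddCommGroup H]
    [InnerProductSpace ℝ H] [CompleteSpace H] {ι : Type*} (b : HilbertBasis ι ℝ H)
    (φ : X → H) (k : X → X → ℝ) (hk : ∀ x y, ⟪φ x, φ y⟫ = k x y)
    (hbdd : ∃ C : ℝ, ∀ x, k x x ≤ C)
    (ρ : Measure X) [IsFiniteMeasure ρ]
    (A : H →L[ℝ] H) (hA : A.IsPositive)
    (htc : Summable fun i => ⟪b i, A (b i)⟫)
    (v : H) (V : H →L[ℝ] H)
    (hV : ∀ f g : H, ⟪f, V g⟫ = ∫ x, ⟪v, φ x⟫ * (⟪f, φ x⟫ * ⟪φ x, g⟫) ∂ρ)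
    (w : H) (hw : w = ∫ x, ⟪φ x, A (φ x)⟫ • φ x ∂ρ)
    (hintw : Integrable (fun x => ⟪φ x, A (φ x)⟫ • φ x) ρ) :
    ⟪v, w⟫ = ∑' i, ⟪A (b i), V (b i)⟫ := by
  classical
  obtain ⟨C, hC⟩ := hbdd
  have hsym := hA.1
  set p : X → ℝ := fun x => ⟪φ x, A (φ x)⟫ with hp
  set F : X → H := fun x => p x • φ x with hFdef
  set G : ι → X → ℝ := fun i x => ⟪v, φ x⟫ * (⟪A (b i), φ x⟫ * ⟪φ x, b i⟫) with hGdef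
  -- bound on ‖φ x‖
  set D : ℝ := Real.sqrt (max C 0) with hD
  have hDnn : 0 ≤ D := Real.sqrt_nonneg _
  have hφ : ∀ x, ‖φ x‖ ≤ D := by
    intro x
    have h1 : ‖φ x‖ ^ 2 = k x x := by rw [← hk x x, real_inner_self_eq_norm_sq]
    have h2 : ‖φ x‖ ^ 2 ≤ max C 0 := h1 ▸ le_trans (hC x) (le_max_left _ _)
    calc ‖φ x‖ = Real.sqrt (‖φ x‖ ^ 2) := by
          rw [Real.sqrt_sq (norm_nonneg _)]
      _ ≤ D := Real.sqrt_le_sqrt h2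
  -- kernel vanishing
  have hker : ∀ x, p x = 0 → A (φ x) = 0 := fun x hx => aux_pos_zero A hA (φ x) hx
  -- rewrite G through A-symmetry
  have hGalt : ∀ i x, G i x = ⟪v, φ x⟫ * (⟪A (φ x), b i⟫ * ⟪φ x, b i⟫) := by
    intro i x
    have h : ⟪A (b i), φ x⟫ = ⟪A (φ x), b i⟫ :=
      (hsym (b i) (φ x)).trans (real_inner_comm _ _)
    show ⟪v, φ x⟫ * (⟪A (b i), φ x⟫ * ⟪φ x, b i⟫) = _
    rw [h]
  -- pointwise Parseval
  have hParseval : ∀ x, ∑' i, G i x = p x * ⟪v, φ x⟫ := by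
    intro x
    have h1 : ∀ i, G i x = ⟪v, φ x⟫ * (⟪φ x, b i⟫ * ⟪b i, A (φ x)⟫) := by
      intro i
      rw [hGalt]
      rw [real_inner_comm (A (φ x)) (b i)]
      ring
    calc ∑' i, G i x = ∑' i, ⟪v, φ x⟫ * (⟪φ x, b i⟫ * ⟪b i, A (φ x)⟫) := by
          exact tsum_congr h1
      _ = ⟪v, φ x⟫ * ∑' i, ⟪φ x, b i⟫ * ⟪b i, A (φ x)⟫ := tsum_mul_left
      _ = ⟪v, φ x⟫ * ⟪φ x, A (φ x)⟫ := by rw [b.tsum_inner_mul_inner]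
      _ = p x * ⟪v, φ x⟫ := by rw [hp]; ring
  -- summability of squares
  have hsq : ∀ y : H, Summable (fun i => ⟪y, b i⟫ ^ 2) := by
    intro y
    have := b.summable_inner_mul_inner y y
    refine this.congr fun i => ?_
    rw [sq, real_inner_comm y (b i)]
  have htsum_sq : ∀ y : H, ∑' i, ⟪y, b i⟫ ^ 2 = ‖y‖ ^ 2 := by
    intro y
    have := b.tsum_inner_mul_inner y y
    rw [← real_inner_self_eq_norm_sq]
    rw [← this]
    congr 1 with i
    rw [sq, real_inner_comm y (b i)]
  -- pointwise domination
  set M : ℝ := ‖v‖ * D * (((‖A‖ * D) ^ 2 + D ^ 2) / 2) with hM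
  have hGbd : ∀ x i, ‖G i x‖ ≤ |⟪v, φ x⟫| * ((⟪A (φ x), b i⟫ ^ 2 + ⟪φ x, b i⟫ ^ 2) / 2) := by
    intro x i
    rw [hGalt, norm_mul, norm_mul]
    have h2 : ‖⟪A (φ x), b i⟫‖ * ‖⟪φ x, b i⟫‖ ≤ (⟪A (φ x), b i⟫ ^ 2 + ⟪φ x, b i⟫ ^ 2) / 2 := by
      rw [Real.norm_eq_abs, Real.norm_eq_abs]
      nlinarith [sq_nonneg (|⟪A (φ x), b i⟫| - |⟪φ x, b i⟫|), sq_abs ⟪A (φ x), b i⟫,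
        sq_abs ⟪φ x, b i⟫, abs_nonneg ⟪A (φ x), b i⟫, abs_nonneg ⟪φ x, b i⟫]
    rw [Real.norm_eq_abs ⟪v, φ x⟫]
    exact mul_le_mul_of_nonneg_left h2 (abs_nonneg _)
  have hGsummable : ∀ x, Summable (fun i => ‖G i x‖) := by
    intro x
    apply Summable.of_nonneg_of_le (fun i => norm_nonneg _) (hGbd x)
    exact (((hsq (A (φ x))).add (hsq (φ x))).div_const 2).mul_left _
  have hGtsum_le : ∀ x, ∑' i, ‖G i x‖ ≤ M := by
    intro x
    have h1 : ∑' i, ‖G i x‖ ≤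
        ∑' i, |⟪v, φ x⟫| * ((⟪A (φ x), b i⟫ ^ 2 + ⟪φ x, b i⟫ ^ 2) / 2) := by
      apply Summable.tsum_le_tsum (hGbd x) (hGsummable x)
      exact (((hsq (A (φ x))).add (hsq (φ x))).div_const 2).mul_left _
    have h2 : ∑' i, |⟪v, φ x⟫| * ((⟪A (φ x), b i⟫ ^ 2 + ⟪φ x, b i⟫ ^ 2) / 2)
        = |⟪v, φ x⟫| * ((‖A (φ x)‖ ^ 2 + ‖φ x‖ ^ 2) / 2) := by
      rw [tsum_mul_left]
      congr 1
      rw [tsum_div_const, Summable.tsum_add (hsq (A (φ x))) (hsq (φ x)), htsum_sq, htsum_sq]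
    rw [h2] at h1
    refine le_trans h1 ?_
    have hv : |⟪v, φ x⟫| ≤ ‖v‖ * D :=
      le_trans (abs_real_inner_le_norm v (φ x)) (by
        exact mul_le_mul_of_nonneg_left (hφ x) (norm_nonneg v))
    have hA1 : ‖A (φ x)‖ ^ 2 ≤ (‖A‖ * D) ^ 2 := by
      have := A.le_opNorm (φ x)
      have h' : ‖A (φ x)‖ ≤ ‖A‖ * D :=
        le_trans this (mul_le_mul_of_nonneg_left (hφ x) (norm_nonneg _))
      exact pow_le_pow_left₀ (norm_nonneg _) h' 2
    have hφ2 : ‖φ x‖ ^ 2 ≤ D ^ 2 := pow_le_pow_left₀ (norm_nonneg _) (hφ x) 2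
    rw [hM]
    have hnn : 0 ≤ (‖A (φ x)‖ ^ 2 + ‖φ x‖ ^ 2) / 2 := by positivity
    calc |⟪v, φ x⟫| * ((‖A (φ x)‖ ^ 2 + ‖φ x‖ ^ 2) / 2)
        ≤ (‖v‖ * D) * ((‖A (φ x)‖ ^ 2 + ‖φ x‖ ^ 2) / 2) := mul_le_mul_of_nonneg_right hv hnn
      _ ≤ (‖v‖ * D) * (((‖A‖ * D) ^ 2 + D ^ 2) / 2) := by
          apply mul_le_mul_of_nonneg_left _ (by positivity)
          linarith
  -- measurability of G i
  have hFm : AEStronglyMeasurable F ρ := hintw.aestronglyMeasurable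
  set m : X → ℝ := fun x => ⟪F x, A (F x)⟫ with hm
  have hmm : AEMeasurable m ρ := by
    have hc : Continuous fun y : H => ⟪y, A y⟫ := continuous_id.inner A.continuous
    exact (hc.comp_aestronglyMeasurable hFm).aemeasurable
  have hFinner : ∀ c : H, AEMeasurable (fun x => ⟪c, F x⟫) ρ := fun c =>
    ((continuous_const.inner continuous_id).comp_aestronglyMeasurable hFm).aemeasurable
  have hFinner' : ∀ c : H, AEMeasurable (fun x => ⟪F x, c⟫) ρ := fun c =>
    ((continuous_id.inner continuous_const).comp_aestronglyMeasurable hFm).aemeasurable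
  have hGm : ∀ i, AEStronglyMeasurable (G i) ρ := by
    intro i
    have heq : G i = fun x => (m x)⁻¹ * (⟪v, F x⟫ * (⟪A (b i), F x⟫ * ⟪F x, b i⟫)) := by
      funext x
      have hFx : F x = p x • φ x := rfl
      by_cases hx : p x = 0
      · have hF0 : F x = 0 := by rw [hFx, hx, zero_smul]
        have hG0 : G i x = 0 := by
          rw [hGalt, hker x hx, inner_zero_left, zero_mul, mul_zero]
        rw [hG0, hF0]
        simp
      · have hmx : m x = p x ^ 3 := by
          show ⟪F x, A (F x)⟫ = _
          rw [hFx, A.map_smul, real_inner_smul_left, real_inner_smul_right]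
          rw [show ⟪φ x, A (φ x)⟫ = p x from rfl]
          ring
        rw [hmx, hFx, real_inner_smul_right, real_inner_smul_right, real_inner_smul_left]
        rw [show (G i x : ℝ) = ⟪v, φ x⟫ * (⟪A (b i), φ x⟫ * ⟪φ x, b i⟫) from rfl]
        field_simp
    rw [heq]
    exact (hmm.inv.mul ((hFinner v).mul ((hFinner (A (b i))).mul
      (hFinner' (b i))))).aestronglyMeasurable
  -- countable relevant index set
  obtain ⟨f₀, hf₀m, hFf₀⟩ := hFm
  obtain ⟨D₀, hD₀c, hD₀sub⟩ := hf₀m.isSeparable_range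
  set I : Set ι := ⋃ y ∈ D₀, ({i | ⟪y, b i⟫ ≠ 0} ∪ {i | ⟪A y, b i⟫ ≠ 0}) with hIdef
  have hIc : I.Countable := by
    refine Set.Countable.biUnion hD₀c fun y _ => Set.Countable.union ?_ ?_
    · refine (hsq y).countable_support.mono ?_
      intro i hi
      simp only [Set.mem_setOf_eq] at hi
      simp only [Function.mem_support]
      exact pow_ne_zero 2 hi
    · refine (hsq (A y)).countable_support.mono ?_
      intro i hi
      simp only [Set.mem_setOf_eq] at hi
      simp only [Function.mem_support]
      exact pow_ne_zero 2 hi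
  have horth : ∀ i ∉ I, ∀ y ∈ Set.range f₀, ⟪y, b i⟫ = 0 ∧ ⟪A y, b i⟫ = 0 := by
    intro i hi y hy
    have hZ : IsClosed {y : H | ⟪y, b i⟫ = 0 ∧ ⟪A y, b i⟫ = 0} := by
      have h1 : IsClosed {y : H | ⟪y, b i⟫ = 0} :=
        isClosed_eq (continuous_id.inner continuous_const) continuous_const
      have h2 : IsClosed {y : H | ⟪A y, b i⟫ = 0} :=
        isClosed_eq (A.continuous.inner continuous_const) continuous_const
      exact h1.inter h2
    have hD0Z : D₀ ⊆ {y : H | ⟪y, b i⟫ = 0 ∧ ⟪A y, b i⟫ = 0} := by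
      intro y' hy'
      constructor
      · by_contra hne
        exact hi (Set.mem_biUnion hy' (Or.inl hne))
      · by_contra hne
        exact hi (Set.mem_biUnion hy' (Or.inr hne))
    exact hZ.closure_subset_iff.mpr hD0Z (hD₀sub hy)
  have hvanish : ∀ᵐ x ∂ρ, ∀ i, i ∉ I → G i x = 0 := by
    filter_upwards [hFf₀] with x hx
    intro i hi
    by_cases hpx : p x = 0
    · rw [hGalt, hker x hpx, inner_zero_left, zero_mul, mul_zero]
    · have hφx : φ x = (p x)⁻¹ • f₀ x := by
        rw [← hx, show F x = p x • φ x from rfl, smul_smul, inv_mul_cancel₀ hpx, one_smul]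
      have h0 : ⟪φ x, b i⟫ = 0 := by
        rw [hφx, real_inner_smul_left, (horth i hi (f₀ x) (Set.mem_range_self x)).1, mul_zero]
      rw [hGalt, h0, mul_zero, mul_zero]
  have hIsupp2 : ∀ i, i ∉ I → ⟪A (b i), V (b i)⟫ = 0 := by
    intro i hi
    have h0 : (∫ x, G i x ∂ρ) = 0 := by
      refine integral_eq_zero_of_ae ?_
      filter_upwards [hvanish] with x hx using hx i hi
    calc ⟪A (b i), V (b i)⟫ = ∫ x, G i x ∂ρ := hV (A (b i)) (b i)
      _ = 0 := h0
  have hcnt : Countable I := hIc.to_subtype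
  -- main chain
  have step1 : ⟪v, w⟫ = ∫ x, p x * ⟪v, φ x⟫ ∂ρ := by
    have h1 : ⟪v, w⟫ = ∫ x, ⟪v, F x⟫ ∂ρ := by
      rw [hw]
      exact (integral_inner (𝕜 := ℝ) hintw v).symm
    rw [h1]
    refine integral_congr_ae (Filter.Eventually.of_forall fun x => ?_)
    exact real_inner_smul_right v (φ x) (p x)
  have step2 : ∫ x, p x * ⟪v, φ x⟫ ∂ρ = ∫ x, ∑' i : I, G i x ∂ρ := by
    refine integral_congr_ae ?_
    filter_upwards [hvanish] with x hx
    have hsupp : Function.support (fun i => G i x) ⊆ I := by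
      intro i hi
      simp only [Function.mem_support] at hi
      by_contra hni
      exact hi (hx i hni)
    exact ((tsum_subtype_eq_of_support_subset (f := fun i => G i x) hsupp).trans
      (hParseval x)).symm
  have hbound : ∑' (i : I), ∫⁻ x, ‖G i x‖₊ ∂ρ ≠ ⊤ := by
    rw [← lintegral_tsum fun i : I => (by simpa only [enorm_eq_nnnorm] using (hGm i).enorm :
      AEMeasurable (fun x => (‖G i x‖₊ : ENNReal)) ρ)]
    have hpt : ∀ x, ∑' (i : I), (‖G i x‖₊ : ENNReal) ≤ ENNReal.ofReal M := by
      intro x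
      have hsub : Summable fun i : I => ‖G i x‖ := (hGsummable x).subtype I
      have h1 : ∑' (i : I), (‖G i x‖₊ : ENNReal) = ENNReal.ofReal (∑' i : I, ‖G i x‖) := by
        rw [ENNReal.ofReal_tsum_of_nonneg (fun i => norm_nonneg _) hsub]
        exact tsum_congr fun i => (ofReal_norm_eq_enorm _).symm
      rw [h1]
      apply ENNReal.ofReal_le_ofReal
      have hle : ∑' i : I, ‖G i x‖ ≤ ∑' i, ‖G i x‖ := by
        have heq : ∑' i : I, ‖G i x‖ = ∑' i, I.indicator (fun i => ‖G i x‖) i :=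
          tsum_subtype I (fun i => ‖G i x‖)
        rw [heq]
        refine Summable.tsum_le_tsum (fun i => ?_) ((hGsummable x).indicator I) (hGsummable x)
        exact Set.indicator_le_self' (fun j _ => norm_nonneg _) i
      exact hle.trans (hGtsum_le x)
    have hfin : (∫⁻ x, ∑' (i : I), (‖G i x‖₊ : ENNReal) ∂ρ) ≤ ENNReal.ofReal M * ρ Set.univ := by
      calc (∫⁻ x, ∑' (i : I), (‖G i x‖₊ : ENNReal) ∂ρ)
          ≤ ∫⁻ _, ENNReal.ofReal M ∂ρ := lintegral_mono hpt
        _ = ENNReal.ofReal M * ρ Set.univ := lintegral_const _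
    exact (lt_of_le_of_lt hfin (ENNReal.mul_lt_top ENNReal.ofReal_lt_top (measure_lt_top ρ _))).ne
  have step3 : ∫ x, ∑' i : I, G i x ∂ρ = ∑' i : I, ∫ x, G i x ∂ρ :=
    integral_tsum (fun i : I => hGm i) hbound
  have step4 : ∑' i : I, ∫ x, G i x ∂ρ = ∑' i : I, ⟪A (b i), V (b i)⟫ :=
    tsum_congr fun i => (hV (A (b i)) (b i)).symm
  have step5 : ∑' i : I, ⟪A (b i), V (b i)⟫ = ∑' i, ⟪A (b i), V (b i)⟫ := by
    have hsupp : Function.support (fun i => ⟪A (b i), V (b i)⟫) ⊆ I := by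
      intro i hi
      simp only [Function.mem_support] at hi
      by_contra hni
      exact hi (hIsupp2 i hni)
    exact tsum_subtype_eq_of_support_subset (f := fun i => ⟪A (b i), V (b i)⟫) hsupp
  rw [step1, step2, step3, step4, step5]
end

section
/- Let X be a symmetric n×n real matrix with eigenvalue decomposition X = U diag(λ) Uᵀ, where U is orthogonal. Let λ⁺ be the Euclidean projection of λ ∈ ℝⁿ onto the probability simplex Δ_n = {x ∈ ℝ⁺ⁿ : Σ x_i = 1}. Then X⁺ = U diag(λ⁺) Uᵀ is the Frobenius-norm projection of X onto the set {M symmetric PSD : tr(M) = 1}, i.e., X⁺ minimizes ‖X - M‖_F over all positive semidefinite matrices M with unit trace. -/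
open Matrix

private lemma frob_eq_trace {n : ℕ} (A : Matrix (Fin n) (Fin n) ℝ) :
    ∑ i, ∑ j, (A i j) ^ 2 = (Aᵀ * A).trace := by
  rw [Matrix.trace, Finset.sum_comm]
  simp [Matrix.diag, Matrix.mul_apply, sq]

private lemma frob_conj {n : ℕ} (U A : Matrix (Fin n) (Fin n) ℝ)
    (h1 : U * Uᵀ = 1) (h2 : Uᵀ * U = 1) :
    ∑ i, ∑ j, ((U * A * Uᵀ) i j) ^ 2 = ∑ i, ∑ j, (A i j) ^ 2 := by
  rw [frob_eq_trace, frob_eq_trace]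
  have : (U * A * Uᵀ)ᵀ * (U * A * Uᵀ) = U * (Aᵀ * A) * Uᵀ := by
    simp only [Matrix.transpose_mul, Matrix.transpose_transpose, Matrix.mul_assoc]
    rw [← Matrix.mul_assoc Uᵀ U, h2, Matrix.one_mul]
  rw [this, Matrix.trace_mul_comm, ← Matrix.mul_assoc, Matrix.mul_assoc Uᵀ, ← Matrix.mul_assoc Uᵀ,
    h2, Matrix.one_mul]

/-- if `X = U diag(λ) Uᵀ` with `U` orthogonal and `λ⁺` is the Euclidean
projection of `λ` onto the probability simplex, then `X⁺ = U diag(λ⁺) Uᵀ` is the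
Frobenius-norm projection of `X` onto the PSD matrices with unit trace. -/
theorem stmt13 {n : ℕ} (X U : Matrix (Fin n) (Fin n) ℝ)
    (lam lamPlus : Fin n → ℝ)
    (hXsymm : X.IsSymm)
    (hUorth : U * Uᵀ = 1 ∧ Uᵀ * U = 1)
    (hX : X = U * Matrix.diagonal lam * Uᵀ)
    (hmem : (∀ i, 0 ≤ lamPlus i) ∧ ∑ i, lamPlus i = 1)
    (hproj : ∀ y : Fin n → ℝ, (∀ i, 0 ≤ y i) → (∑ i, y i = 1) →
      ∑ i, (lam i - lamPlus i) ^ 2 ≤ ∑ i, (lam i - y i) ^ 2) :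
    ((U * Matrix.diagonal lamPlus * Uᵀ).PosSemidef ∧
        (U * Matrix.diagonal lamPlus * Uᵀ).trace = 1) ∧
    (∀ M : Matrix (Fin n) (Fin n) ℝ, M.IsSymm → M.PosSemidef → M.trace = 1 →
      ∑ i, ∑ j, (X i j - (U * Matrix.diagonal lamPlus * Uᵀ) i j) ^ 2
        ≤ ∑ i, ∑ j, (X i j - M i j) ^ 2) := by
  obtain ⟨h1, h2⟩ := hUorth
  have hconjT : Uᴴ = Uᵀ := Matrix.conjTranspose_eq_transpose_of_trivial U
  constructor
  · constructor
    · have := (Matrix.posSemidef_diagonal_iff.mpr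
        (fun i => by simpa using hmem.1 i)).mul_mul_conjTranspose_same U
      rwa [hconjT] at this
    · rw [Matrix.trace_mul_comm, ← Matrix.mul_assoc, h2, Matrix.one_mul,
        Matrix.trace_diagonal, hmem.2]
  · intro M hMsymm hMpsd hMtr
    set N : Matrix (Fin n) (Fin n) ℝ := Uᵀ * M * U with hN
    have hNpsd : N.PosSemidef := by
      have h3 : Uᵀᴴ = U := by
        rw [Matrix.conjTranspose_eq_transpose_of_trivial, Matrix.transpose_transpose]
      have := hMpsd.mul_mul_conjTranspose_same Uᵀ
      rwa [h3] at this
    have hNdiag : ∀ i, 0 ≤ N i i := fun i => by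
      exact hNpsd.diag_nonneg
    have hNtr : ∑ i, N i i = 1 := by
      have : N.trace = 1 := by
        rw [hN, Matrix.trace_mul_comm, ← Matrix.mul_assoc, h1, Matrix.one_mul, hMtr]
      simpa [Matrix.trace, Matrix.diag] using this
    have hM : U * N * Uᵀ = M := by
      rw [hN]
      calc U * (Uᵀ * M * U) * Uᵀ = (U * Uᵀ) * M * (U * Uᵀ) := by
            simp only [Matrix.mul_assoc]
        _ = M := by rw [h1, Matrix.one_mul, Matrix.mul_one]
    -- rewrite both sides as Frobenius norms of differences
    have key1 : ∑ i, ∑ j, (X i j - (U * Matrix.diagonal lamPlus * Uᵀ) i j) ^ 2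
        = ∑ i, (lam i - lamPlus i) ^ 2 := by
      have hXdiff : X - U * Matrix.diagonal lamPlus * Uᵀ
          = U * (Matrix.diagonal lam - Matrix.diagonal lamPlus) * Uᵀ := by
        rw [hX]; noncomm_ring
      have := frob_conj U (Matrix.diagonal lam - Matrix.diagonal lamPlus) h1 h2
      calc ∑ i, ∑ j, (X i j - (U * Matrix.diagonal lamPlus * Uᵀ) i j) ^ 2
          = ∑ i, ∑ j, ((U * (Matrix.diagonal lam - Matrix.diagonal lamPlus) * Uᵀ) i j) ^ 2 := by
            rw [← hXdiff]; simp [Matrix.sub_apply]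
        _ = ∑ i, ∑ j, ((Matrix.diagonal lam - Matrix.diagonal lamPlus) i j) ^ 2 := this
        _ = ∑ i, (lam i - lamPlus i) ^ 2 := by
            refine Finset.sum_congr rfl fun i _ => ?_
            rw [Finset.sum_eq_single i]
            · simp [Matrix.diagonal_apply]
            · intro j _ hji
              simp [Matrix.diagonal_apply, Ne.symm hji]
            · simp
    have key2 : ∑ i, ∑ j, (X i j - M i j) ^ 2
        = ∑ i, ∑ j, ((Matrix.diagonal lam - N) i j) ^ 2 := by
      have hXdiff : X - M = U * (Matrix.diagonal lam - N) * Uᵀ := by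
        rw [hX, ← hM]; noncomm_ring
      calc ∑ i, ∑ j, (X i j - M i j) ^ 2
          = ∑ i, ∑ j, ((U * (Matrix.diagonal lam - N) * Uᵀ) i j) ^ 2 := by
            rw [← hXdiff]; simp [Matrix.sub_apply]
        _ = ∑ i, ∑ j, ((Matrix.diagonal lam - N) i j) ^ 2 :=
            frob_conj U _ h1 h2
    rw [key1, key2]
    calc ∑ i, (lam i - lamPlus i) ^ 2
        ≤ ∑ i, (lam i - N i i) ^ 2 := hproj (fun i => N i i) hNdiag hNtr
      _ ≤ ∑ i, ∑ j, ((Matrix.diagonal lam - N) i j) ^ 2 := by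
          refine Finset.sum_le_sum fun i _ => ?_
          have : (lam i - N i i) ^ 2 = ((Matrix.diagonal lam - N) i i) ^ 2 := by
            simp [Matrix.sub_apply, Matrix.diagonal_apply]
          rw [this]
          exact Finset.single_le_sum
            (f := fun j => ((Matrix.diagonal lam - N) i j) ^ 2)
            (fun j _ => sq_nonneg _) (Finset.mem_univ i)
end
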